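/- Let R be a K-algebra acted upon by groups G and H by K-algebra automorphisms, with commuting actions, such that H acts locally finitely and completely reducibly on R. If R is G-Noetherian, then the invariant ring R^H (which is G-stable since the actions commute) is G-Noetherian. -/

import Mathlib

section Defs

variable {K R H : Type*} [Field K] [CommRing R] [Algebra K R] [Group H]

/-- A `K`-subspace of `R` is `H`-stable (for the action `ρH`) if it is preserved
by every element of `H`. -/
def HStable (ρH : H →* (R ≃ₐ[K] R)) (U : Submodule K R) : Prop :=
  ∀ h : H, ∀ u ∈ U, ρH h u ∈ U

/-- `W` is an irreducible `H`-submodule: nonzero, `H`-stable, and with no proper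
nonzero `H`-stable subspace. -/
def HIrreducible (ρH : H →* (R ≃ₐ[K] R)) (W : Submodule K R) : Prop :=
  W ≠ ⊥ ∧ HStable ρH W ∧ ∀ W' ≤ W, HStable ρH W' → W' = ⊥ ∨ W' = W

/-- The subalgebra `R^H` of `H`-invariants of `R`. -/
def invariantsSubalgebra (ρH : H →* (R ≃ₐ[K] R)) : Subalgebra K R where
  carrier := {a | ∀ h : H, ρH h a = a}
  mul_mem' := by intro a b ha hb h; rw [map_mul, ha h, hb h]
  add_mem' := by intro a b ha hb h; rw [map_add, ha h, hb h]
  algebraMap_mem' := fun r h => (ρH h).commutes r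

end Defs

section Aux

variable {K R H : Type*} [Field K] [CommRing R] [Algebra K R] [Group H]
variable (ρH : H →* (R ≃ₐ[K] R))

lemma mem_invAlg_iff {x : R} : x ∈ invariantsSubalgebra ρH ↔ ∀ h : H, ρH h x = x :=
  Iff.rfl

/-- the invariants as a `K`-submodule of `R`. -/
def invSub : Submodule K R := Subalgebra.toSubmodule (invariantsSubalgebra ρH)

lemma mem_invSub {x : R} : x ∈ invSub ρH ↔ ∀ h : H, ρH h x = x := Iff.rfl

/-- the sum of all irreducible `H`-submodules not contained in the invariants. -/
def Tmod : Submodule K R := sSup {W | HIrreducible ρH W ∧ ¬ W ≤ invSub ρH}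

lemma hstable_sup {U V : Submodule K R} (hU : HStable ρH U) (hV : HStable ρH V) :
    HStable ρH (U ⊔ V) := by
  intro h u hu
  rcases Submodule.mem_sup.mp hu with ⟨a, ha, b, hb, rfl⟩
  rw [map_add]
  exact Submodule.add_mem_sup (hU h a ha) (hV h b hb)

lemma hstable_finsup (T : Finset (Submodule K R)) (hT : ∀ W ∈ T, HStable ρH W) :
    HStable ρH (T.sup id) := by
  classical
  induction T using Finset.induction_on with
  | empty => intro h u hu; simpa using hu
  | @insert W T' hWT' ih =>
    rw [Finset.sup_insert]
    exact hstable_sup ρH (hT W (Finset.mem_insert_self _ _))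
      (ih fun V hV => hT V (Finset.mem_insert_of_mem hV))

lemma span_singleton_le_invSub {W : Submodule K R} (hW : HIrreducible ρH W)
    {w : R} (hwW : w ∈ W) (hw : ∀ h : H, ρH h w = w) (hw0 : w ≠ 0) :
    W ≤ invSub ρH := by
  have hspan : Submodule.span K {w} ≤ W := Submodule.span_le.mpr (by simpa using hwW)
  have hst : HStable ρH (Submodule.span K {w}) := by
    intro h u hu
    rcases Submodule.mem_span_singleton.mp hu with ⟨c, rfl⟩
    rw [map_smul, hw h]
    exact Submodule.smul_mem _ _ (Submodule.mem_span_singleton_self w)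
  rcases hW.2.2 _ hspan hst with h0 | hWeq
  · exact absurd (by simpa using Submodule.span_eq_bot.mp h0 w rfl) hw0
  · rw [← hWeq]
    intro u hu
    rcases Submodule.mem_span_singleton.mp hu with ⟨c, rfl⟩
    intro h
    rw [map_smul, hw h]

/-- invariant element of a finite sum of non-invariant irreducibles is zero. -/
lemma invariant_in_finsup_eq_zero (T : Finset (Submodule K R))
    (hT : ∀ W ∈ T, HIrreducible ρH W ∧ ¬ W ≤ invSub ρH) :
    ∀ x ∈ T.sup id, (∀ h : H, ρH h x = x) → x = 0 := by
  classical
  induction T using Finset.induction_on with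
  | empty => intro x hx _; simpa using hx
  | @insert W T' hWT' ih =>
    intro x hxmem hinv
    rw [Finset.sup_insert] at hxmem
    set V : Submodule K R := T'.sup id with hV
    have hVst : HStable ρH V :=
      hstable_finsup ρH T' (fun U hU => (hT U (Finset.mem_insert_of_mem hU)).1.2.1)
    have hW : HIrreducible ρH W ∧ ¬ W ≤ invSub ρH := hT W (Finset.mem_insert_self _ _)
    by_cases hWV : (W : Submodule K R) ≤ V
    · have hxV : x ∈ V := by
        have hle : (id W : Submodule K R) ⊔ V ≤ V := sup_le hWV le_rfl
        exact hle hxmem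
      exact ih (fun U hU => hT U (Finset.mem_insert_of_mem hU)) x hxV hinv
    · have hbot : W ⊓ V = ⊥ := by
        rcases hW.1.2.2 (W ⊓ V) inf_le_left (fun h u hu =>
          ⟨hW.1.2.1 h u hu.1, hVst h u hu.2⟩) with h0 | heq
        · exact h0
        · exact absurd (heq ▸ inf_le_right) hWV
      rcases Submodule.mem_sup.mp hxmem with ⟨w, hw, v, hv, rfl⟩
      have hwinv : ∀ h : H, ρH h w = w := by
        intro h
        have h1 : ρH h w + ρH h v = w + v := by rw [← map_add]; exact hinv h
        have h3 : ρH h w - w ∈ W ⊓ V := by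
          constructor
          · exact sub_mem (hW.1.2.1 h w hw) hw
          · have h2 : ρH h w - w = v - ρH h v := by linear_combination h1
            rw [h2]
            exact sub_mem hv (hVst h v hv)
        rw [hbot, Submodule.mem_bot] at h3
        exact sub_eq_zero.mp h3
      by_cases hw0 : w = 0
      · have hxv : w + v = v := by rw [hw0, zero_add]
        rw [hxv] at hinv ⊢
        exact ih (fun U hU => hT U (Finset.mem_insert_of_mem hU)) v hv hinv
      · exact absurd (span_singleton_le_invSub ρH hW.1 hw hwinv hw0) hW.2

lemma invariant_in_Tmod_eq_zero {x : R} (hx : x ∈ Tmod ρH)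
    (hinv : ∀ h : H, ρH h x = x) : x = 0 := by
  classical
  rcases Submodule.mem_sSup_iff_exists_finset.mp hx with ⟨s, hsS, hmem⟩
  have hmem' : x ∈ s.sup id := by
    rw [Finset.sup_eq_iSup]
    simpa using hmem
  exact invariant_in_finsup_eq_zero ρH s (fun W hW => hsS hW) x hmem' hinv

lemma invSub_sup_Tmod
    (hlocfin : ∀ f : R, ∃ U : Submodule K R,
      FiniteDimensional K U ∧ HStable ρH U ∧ f ∈ U)
    (hcompred : ∀ U : Submodule K R, FiniteDimensional K U → HStable ρH U →
      U = sSup {W | W ≤ U ∧ HIrreducible ρH W}) :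
    invSub ρH ⊔ Tmod ρH = ⊤ := by
  rw [eq_top_iff]
  intro x _
  obtain ⟨U, hfin, hst, hxU⟩ := hlocfin x
  have hle : sSup {W | W ≤ U ∧ HIrreducible ρH W} ≤ invSub ρH ⊔ Tmod ρH := by
    apply sSup_le
    rintro W ⟨hWU, hWirr⟩
    by_cases h : W ≤ invSub ρH
    · exact h.trans le_sup_left
    · exact (le_sSup (show W ∈ {W | HIrreducible ρH W ∧ ¬ W ≤ invSub ρH} from
        ⟨hWirr, h⟩)).trans le_sup_right
  exact hle ((hcompred U hfin hst) ▸ hxU)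

lemma isCompl_invSub_Tmod
    (hlocfin : ∀ f : R, ∃ U : Submodule K R,
      FiniteDimensional K U ∧ HStable ρH U ∧ f ∈ U)
    (hcompred : ∀ U : Submodule K R, FiniteDimensional K U → HStable ρH U →
      U = sSup {W | W ≤ U ∧ HIrreducible ρH W}) :
    IsCompl (invSub ρH) (Tmod ρH) := by
  constructor
  · rw [disjoint_iff]
    rw [eq_bot_iff]
    intro x hx
    rw [Submodule.mem_bot]
    exact invariant_in_Tmod_eq_zero ρH hx.2 ((mem_invSub ρH).mp hx.1)
  · rw [codisjoint_iff]
    exact invSub_sup_Tmod ρH hlocfin hcompred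

/-- multiplication by an invariant element preserves `Tmod`. -/
lemma Tmod_mul_mem {s : R} (hs : ∀ h : H, ρH h s = s) {t : R} (ht : t ∈ Tmod ρH) :
    t * s ∈ Tmod ρH := by
  let μ : R →ₗ[K] R := LinearMap.mulRight K s
  have hμ : ∀ r : R, μ r = r * s := fun r => rfl
  have hcom : ∀ (h : H) (r : R), ρH h (r * s) = ρH h r * s := by
    intro h r; rw [map_mul, hs h]
  suffices hsuff : Tmod ρH ≤ Submodule.comap μ (Tmod ρH) by
    exact hsuff ht
  apply sSup_le
  rintro W ⟨hWirr, hWninv⟩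
  have hNst : HStable ρH (W ⊓ LinearMap.ker μ) := by
    intro h u hu
    rw [Submodule.mem_inf] at hu ⊢
    refine ⟨hWirr.2.1 h u hu.1, ?_⟩
    rw [LinearMap.mem_ker]
    have hu2 : u * s = 0 := LinearMap.mem_ker.mp hu.2
    rw [hμ, ← hcom h u, hu2, map_zero]
  rcases hWirr.2.2 (W ⊓ LinearMap.ker μ) inf_le_left hNst with hN | hN
  · -- μ injective on W : the image is again a non-invariant irreducible
    have hker : ∀ u ∈ W, u * s = 0 → u = 0 := by
      intro u hu hus
      have hmem : u ∈ W ⊓ LinearMap.ker μ :=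
        Submodule.mem_inf.mpr ⟨hu, LinearMap.mem_ker.mpr hus⟩
      rw [hN, Submodule.mem_bot] at hmem
      exact hmem
    have himgirr : HIrreducible ρH (Submodule.map μ W) := by
      refine ⟨?_, ?_, ?_⟩
      · rcases (Submodule.ne_bot_iff W).mp hWirr.1 with ⟨w, hwW, hw0⟩
        apply (Submodule.ne_bot_iff _).mpr
        refine ⟨w * s, Submodule.mem_map.mpr ⟨w, hwW, rfl⟩,
          fun h0 => hw0 (hker w hwW h0)⟩
      · rintro h y ⟨u, hu, rfl⟩
        exact Submodule.mem_map.mpr ⟨ρH h u, hWirr.2.1 h u hu, (hcom h u).symm⟩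
      · intro W'' hle hst
        have hPst : HStable ρH (W ⊓ Submodule.comap μ W'') := by
          intro h u hu
          rw [Submodule.mem_inf] at hu ⊢
          refine ⟨hWirr.2.1 h u hu.1, ?_⟩
          rw [Submodule.mem_comap]
          have hu2 : u * s ∈ W'' := Submodule.mem_comap.mp hu.2
          show μ (ρH h u) ∈ W''
          rw [hμ, ← hcom h u]
          exact hst h (u * s) hu2
        have hW''eq : W'' = Submodule.map μ (W ⊓ Submodule.comap μ W'') := by
          apply le_antisymm
          · intro y hy
            rcases Submodule.mem_map.mp (hle hy) with ⟨u, hu, rfl⟩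
            exact Submodule.mem_map.mpr
              ⟨u, Submodule.mem_inf.mpr ⟨hu, Submodule.mem_comap.mpr hy⟩, rfl⟩
          · rintro y hy
            rcases Submodule.mem_map.mp hy with ⟨u, hu, rfl⟩
            exact Submodule.mem_comap.mp (Submodule.mem_inf.mp hu).2
        rcases hWirr.2.2 (W ⊓ Submodule.comap μ W'') inf_le_left hPst with hP | hP
        · left; rw [hW''eq, hP, Submodule.map_bot]
        · right; rw [hW''eq, hP]
    have himgninv : ¬ Submodule.map μ W ≤ invSub ρH := by
      intro hcont
      apply hWninv
      intro u hu
      rw [mem_invSub]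
      intro h
      have h1 : ρH h (u * s) = u * s :=
        (mem_invSub ρH).mp (hcont (Submodule.mem_map.mpr ⟨u, hu, rfl⟩)) h
      rw [hcom h u] at h1
      have h2 : (ρH h u - u) * s = 0 := by rw [sub_mul, h1, sub_self]
      have h3 : ρH h u - u = 0 := hker _ (sub_mem (hWirr.2.1 h u hu) hu) h2
      exact sub_eq_zero.mp h3
    intro u hu
    rw [Submodule.mem_comap]
    have hle : Submodule.map μ W ≤ Tmod ρH :=
      le_sSup (show Submodule.map μ W ∈
        {W | HIrreducible ρH W ∧ ¬ W ≤ invSub ρH} from ⟨himgirr, himgninv⟩)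
    exact hle (Submodule.mem_map.mpr ⟨u, hu, rfl⟩)
  · -- μ kills W
    intro u hu
    rw [Submodule.mem_comap]
    have hWker : W ≤ LinearMap.ker μ := by rw [← hN]; exact inf_le_right
    have h0 : μ u = 0 := LinearMap.mem_ker.mp (hWker hu)
    rw [h0]
    exact zero_mem _

lemma reynolds_apply_invariant (hc : IsCompl (invSub ρH) (Tmod ρH)) {x : R}
    (hx : x ∈ invSub ρH) :
    ((Submodule.linearProjOfIsCompl (invSub ρH) (Tmod ρH) hc x : R)) = x :=
  congrArg Subtype.val (Submodule.linearProjOfIsCompl_apply_left hc ⟨x, hx⟩)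

lemma reynolds_mul (hc : IsCompl (invSub ρH) (Tmod ρH)) (a : R) {s : R}
    (hs : ∀ h : H, ρH h s = s) :
    ((Submodule.linearProjOfIsCompl (invSub ρH) (Tmod ρH) hc (a * s) : R))
      = (Submodule.linearProjOfIsCompl (invSub ρH) (Tmod ρH) hc a : R) * s := by
  set π := Submodule.linearProjOfIsCompl (invSub ρH) (Tmod ρH) hc with hπ
  have hmemT : a - (π a : R) ∈ Tmod ρH := by
    rw [← Submodule.linearProjOfIsCompl_apply_eq_zero_iff hc]
    rw [map_sub]
    rw [show Submodule.projectionOnto (invSub ρH) (Tmod ρH) hc ((π a : R)) = π a from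
      Submodule.projectionOnto_apply_left hc (π a)]
    exact sub_self _
  have key : a * s = (π a : R) * s + (a - (π a : R)) * s := by ring
  have hmul_inv : (π a : R) * s ∈ invSub ρH := by
    rw [mem_invSub]
    intro h
    rw [map_mul, (mem_invSub ρH).mp (π a).2 h, hs h]
  have h1 : ((π ((π a : R) * s) : R)) = (π a : R) * s :=
    reynolds_apply_invariant ρH hc hmul_inv
  have h2 : π ((a - (π a : R)) * s) = 0 :=
    Submodule.projectionOnto_apply_of_mem_right hc (Tmod_mul_mem ρH hs hmemT)
  rw [key, map_add, h2, add_zero, h1]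

/-- contraction : an invariant element of the extended ideal lies in the original ideal. -/
lemma ideal_contraction (hc : IsCompl (invSub ρH) (Tmod ρH))
    (J : Ideal (invariantsSubalgebra ρH)) (x : invariantsSubalgebra ρH)
    (hx : (x : R) ∈
      Ideal.span (Subtype.val '' (J : Set (invariantsSubalgebra ρH)))) :
    x ∈ J := by
  classical
  set π := Submodule.linearProjOfIsCompl (invSub ρH) (Tmod ρH) hc with hπ
  rcases Submodule.mem_span_set.mp hx with ⟨c, hsupp, hsum⟩
  have hmem : ∀ i : R, (π (c i * i) : R) ∈ invariantsSubalgebra ρH := by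
    intro i
    exact (mem_invAlg_iff ρH).mpr ((mem_invSub ρH).mp (π (c i * i)).2)
  set y : invariantsSubalgebra ρH :=
    ∑ i ∈ c.support, (⟨(π (c i * i) : R), hmem i⟩ : invariantsSubalgebra ρH) with hy
  have hyJ : y ∈ J := by
    apply sum_mem
    intro i hi
    rcases hsupp hi with ⟨u, huJ, hui⟩
    have hsinv : ∀ h : H, ρH h i = i := by
      intro h; rw [← hui]; exact (mem_invAlg_iff ρH).mp u.2 h
    have heq : (⟨(π (c i * i) : R), hmem i⟩ : invariantsSubalgebra ρH)
        = (⟨(π (c i) : R), (mem_invAlg_iff ρH).mpr ((mem_invSub ρH).mp (π (c i)).2)⟩ :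
            invariantsSubalgebra ρH) * u := by
      apply Subtype.ext
      show (π (c i * i) : R) = (π (c i) : R) * (u : R)
      rw [reynolds_mul ρH hc (c i) hsinv, hui]
    rw [heq]
    exact Ideal.mul_mem_left J _ huJ
  have hxy : (x : R) = (y : R) := by
    have hx_inv : (x : R) ∈ invSub ρH :=
      (mem_invSub ρH).mpr ((mem_invAlg_iff ρH).mp x.2)
    have h1 : (x : R) = (π (x : R) : R) :=
      (reynolds_apply_invariant ρH hc hx_inv).symm
    have h2 : (x : R) = c.sum fun mi r => r • mi := hsum.symm
    rw [h1]
    rw [show ((x : R)) = ∑ i ∈ c.support, c i * i by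
      rw [h2, Finsupp.sum]; exact Finset.sum_congr rfl fun i _ => (smul_eq_mul (α := R) _ _).symm]
    rw [map_sum]
    rw [hy]
    push_cast
    rfl
  exact (Subtype.ext hxy ▸ hyJ : x ∈ J)

end Aux

/-- if `G` and `H` act on the `K`-algebra `R` by commuting
`K`-algebra automorphisms, `H` acting locally finitely and completely reducibly,
and `R` is `G`-Noetherian (every ascending chain of `G`-stable ideals of `R`
stabilises), then the invariant ring `R^H` is `G`-Noetherian: every ascending
chain of `G`-stable ideals of `R^H` stabilises. -/
theorem ringGNoetherian_invariants
    {K R G H : Type*} [Field K] [CommRing R] [Algebra K R] [Group G] [Group H]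
    (ρG : G →* (R ≃ₐ[K] R)) (ρH : H →* (R ≃ₐ[K] R))
    (hcomm : ∀ (g : G) (h : H) (r : R), ρG g (ρH h r) = ρH h (ρG g r))
    (hlocfin : ∀ f : R, ∃ U : Submodule K R,
      FiniteDimensional K U ∧ HStable ρH U ∧ f ∈ U)
    (hcompred : ∀ U : Submodule K R, FiniteDimensional K U → HStable ρH U →
      U = sSup {W | W ≤ U ∧ HIrreducible ρH W})
    (hR : ∀ I : ℕ → Ideal R, (∀ n, I n ≤ I (n + 1)) →
      (∀ n (g : G), ∀ x ∈ I n, ρG g x ∈ I n) →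
      ∃ m, ∀ n, m ≤ n → I n = I m) :
    ∀ J : ℕ → Ideal (invariantsSubalgebra ρH), (∀ n, J n ≤ J (n + 1)) →
      (∀ n (g : G), ∀ x ∈ J n, ∀ y : invariantsSubalgebra ρH,
        (y : R) = ρG g (x : R) → y ∈ J n) →
      ∃ m, ∀ n, m ≤ n → J n = J m := by
  intro J hJle hJG
  classical
  have hc : IsCompl (invSub ρH) (Tmod ρH) := isCompl_invSub_Tmod ρH hlocfin hcompred
  set I : ℕ → Ideal R := fun n =>
    Ideal.span (Subtype.val '' ((J n : Set (invariantsSubalgebra ρH)))) with hI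
  have hIle : ∀ n, I n ≤ I (n + 1) := fun n =>
    Ideal.span_mono (Set.image_mono (hJle n))
  have hIG : ∀ n (g : G), ∀ x ∈ I n, ρG g x ∈ I n := by
    intro n g x hx
    refine Submodule.span_induction ?_ ?_ ?_ ?_ hx
    · rintro r ⟨y, hy, rfl⟩
      have hinv : (ρG g (y : R) : R) ∈ invariantsSubalgebra ρH := by
        rw [mem_invAlg_iff]
        intro h
        rw [← hcomm g h (y : R), (mem_invAlg_iff ρH).mp y.2 h]
      have hmemJ : (⟨ρG g (y : R), hinv⟩ : invariantsSubalgebra ρH) ∈ J n :=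
        hJG n g y hy _ rfl
      exact Ideal.subset_span ⟨_, hmemJ, rfl⟩
    · rw [map_zero]; exact zero_mem _
    · intro a b _ _ ha hb; rw [map_add]; exact add_mem ha hb
    · intro a b _ hb
      rw [smul_eq_mul, map_mul]
      exact Ideal.mul_mem_left _ _ hb
  obtain ⟨m, hm⟩ := hR I hIle hIG
  refine ⟨m, fun n hmn => ?_⟩
  have hmono : Monotone J := monotone_nat_of_le_succ hJle
  apply le_antisymm
  · intro x hxn
    have hx : (x : R) ∈ I n := Ideal.subset_span ⟨x, hxn, rfl⟩
    rw [hm n hmn] at hx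
    exact ideal_contraction ρH hc (J m) x hx
  · exact hmono hmn
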